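/- Let H be a Hilbert space and T a bounded operator on H. For every λ > ||T||, T can be written as λ(U₁ + U₂ + U₃) for three unitary operators U₁, U₂, U₃ on H. -/

import Mathlib

set_option linter.unusedSectionVars false

section
variable {A : Type*} [CStarAlgebra A] [PartialOrder A] [StarOrderedRing A] [Nontrivial A]

private lemma key_expand (x y : A) (h : x * y = y * x) :
    ((x - Complex.I • y) * (x + Complex.I • y) = x * x + y * y) ∧
    ((x + Complex.I • y) * (x - Complex.I • y) = x * x + y * y) := by
  constructor
  · rw [sub_mul, mul_add, mul_add, smul_mul_assoc, smul_mul_assoc, mul_smul_comm, mul_smul_comm,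
      smul_smul, Complex.I_mul_I, h]
    module
  · rw [mul_sub, add_mul, add_mul, smul_mul_assoc, smul_mul_assoc, mul_smul_comm, mul_smul_comm,
      smul_smul, Complex.I_mul_I, h]
    module

/-- A self-adjoint element of norm at most 1 is the mean of a unitary and its adjoint. -/
lemma aux_sa_mean (p : A) (hpsa : IsSelfAdjoint p) (hp1 : ‖p‖ ≤ 1) :
    ∃ u ∈ unitary A, u + star u = (2 : ℂ) • p := by
  set s : A := cfc (fun x : ℝ => Real.sqrt (1 - x ^ 2)) p with hs
  have hssa : IsSelfAdjoint s := cfc_predicate _ p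
  have hcomm : Commute p s := by
    conv_lhs => rw [← cfc_id ℝ p]
    exact cfc_commute_cfc _ _ p
  have hcont : ContinuousOn (fun x : ℝ => Real.sqrt (1 - x ^ 2)) (spectrum ℝ p) :=
    (Real.continuous_sqrt.comp (by continuity)).continuousOn
  have hspec : ∀ x ∈ spectrum ℝ p, (0:ℝ) ≤ 1 - x ^ 2 := by
    intro x hx
    have := spectrum.norm_le_norm_of_mem hx
    have hx1 : |x| ≤ 1 := le_trans (by simpa using this) hp1
    nlinarith [abs_nonneg x, sq_abs x, sq_nonneg (1 - |x|)]
  have hs2 : p * p + s * s = 1 := by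
    have h1 : s * s = cfc (fun x : ℝ => Real.sqrt (1 - x ^ 2) * Real.sqrt (1 - x ^ 2)) p :=
      (cfc_mul _ _ p hcont hcont).symm
    have h2 : cfc (fun x : ℝ => Real.sqrt (1 - x ^ 2) * Real.sqrt (1 - x ^ 2)) p
        = cfc (fun x : ℝ => 1 - x ^ 2) p :=
      cfc_congr fun x hx => Real.mul_self_sqrt (hspec x hx)
    have h3 : p * p = cfc (fun x : ℝ => x * x) p := by
      conv_lhs => rw [← cfc_id ℝ p]
      exact (cfc_mul _ _ p).symm
    rw [h1, h2, h3, ← cfc_add p _ _, ← cfc_one (R := ℝ) p]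
    exact cfc_congr fun x hx => by simp; ring
  have hstar : star (p + Complex.I • s) = p - Complex.I • s := by
    simp [star_smul, hpsa.star_eq, hssa.star_eq, Complex.star_def, Complex.conj_I, neg_smul,
      sub_eq_add_neg]
  refine ⟨p + Complex.I • s, ?_, ?_⟩
  · rw [Unitary.mem_iff, hstar, (key_expand p s hcomm.eq).1, (key_expand p s hcomm.eq).2, hs2]
    exact ⟨rfl, rfl⟩
  · rw [hstar, two_smul]; abel

/-- An element of norm less than one is a sum of three unitaries. -/
lemma aux_three (a : A) (ha : ‖a‖ < 1) :
    ∃ u₁ ∈ unitary A, ∃ u₂ ∈ unitary A, ∃ u₃ ∈ unitary A, a = u₁ + u₂ + u₃ := by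
  set b : A := (2 : ℂ)⁻¹ • (a + 1) with hbdef
  have hb_unit : IsUnit b := by
    have h1 : IsUnit (1 - (-a)) := isUnit_one_sub_of_norm_lt_one (by simpa using ha)
    have h2 : b = (Units.mk0 (2:ℂ)⁻¹ (by norm_num) : ℂˣ) • (1 - (-a)) := by
      simp [hbdef, sub_neg_eq_add, add_comm]
    rw [h2]
    exact h1.smul _
  have hbnorm : ‖b‖ < 1 := by
    calc ‖b‖ ≤ ‖(2:ℂ)⁻¹‖ * (‖a‖ + ‖(1:A)‖) := by
          rw [hbdef, norm_smul]; gcongr; exact norm_add_le _ _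
      _ = 2⁻¹ * (‖a‖ + 1) := by norm_num
      _ < 1 := by linarith
  -- polar decomposition
  set p : A := CFC.sqrt (star b * b) with hpdef
  have hp0 : (0:A) ≤ p := CFC.sqrt_nonneg _
  have hpsa : IsSelfAdjoint p := IsSelfAdjoint.of_nonneg hp0
  have hpsq : p ^ 2 = star b * b := CFC.sq_sqrt _ (star_mul_self_nonneg b)
  have hp_unit : IsUnit p := by
    rw [← isUnit_pow_iff (by norm_num : (2:ℕ) ≠ 0), hpsq]
    exact hb_unit.star.mul hb_unit
  have hpnorm : ‖p‖ ≤ 1 := by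
    have h1 : ‖p‖ * ‖p‖ = ‖b‖ * ‖b‖ := by
      rw [← CStarRing.norm_star_mul_self (x := p), hpsa.star_eq, ← pow_two, hpsq,
        CStarRing.norm_star_mul_self]
    have := (mul_self_inj (norm_nonneg p) (norm_nonneg b)).mp h1
    linarith
  obtain ⟨q, hq⟩ := hp_unit
  have hqp : (↑q⁻¹ : A) * p = 1 := by rw [← hq]; exact q.inv_mul
  have hpq : p * (↑q⁻¹ : A) = 1 := by rw [← hq]; exact q.mul_inv
  set w : A := b * ↑q⁻¹ with hwdef
  have hww : star w * w = 1 := by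
    have : star w * w = star (↑q⁻¹ : A) * (p ^ 2 * ↑q⁻¹) := by
      rw [hwdef, star_mul, hpsq]; noncomm_ring
    rw [this]
    have hqstar : star (↑q⁻¹ : A) = ↑q⁻¹ := by
      have h1 : star (↑q⁻¹ : A) * p = 1 := by
        rw [← hpsa.star_eq, ← star_mul, hpq, star_one]
      calc star (↑q⁻¹ : A) = star ↑q⁻¹ * (p * ↑q⁻¹) := by rw [hpq, mul_one]
        _ = ↑q⁻¹ := by rw [← mul_assoc, h1, one_mul]
    rw [hqstar, pow_two, mul_assoc p p, hpq, mul_one, hqp]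
  have hw_unit : IsUnit w := hb_unit.mul q⁻¹.isUnit
  have hwwstar : w * star w = 1 := by
    obtain ⟨v, hv⟩ := hw_unit
    have : star w = ↑v⁻¹ := by
      calc star w = star w * w * ↑v⁻¹ := by rw [mul_assoc, ← hv, v.mul_inv, mul_one]
        _ = ↑v⁻¹ := by rw [hww, one_mul]
    rw [this, ← hv, v.mul_inv]
  have hw_mem : w ∈ unitary A := Unitary.mem_iff.mpr ⟨hww, hwwstar⟩
  have hwp : w * p = b := by rw [hwdef, mul_assoc, hqp, mul_one]
  obtain ⟨u, hu_mem, hu⟩ := aux_sa_mean p hpsa hpnorm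
  refine ⟨w * u, mul_mem hw_mem hu_mem, w * star u, mul_mem hw_mem (Unitary.star_mem hu_mem),
    -1, ?_, ?_⟩
  · rw [Unitary.mem_iff]; constructor <;> simp
  · have : w * u + w * star u + -1 = (2:ℂ) • b - 1 := by
      rw [← mul_add, hu, mul_smul_comm, hwp]; abel
    rw [this, hbdef, smul_smul]
    norm_num
end


/-- Every bounded operator `T` on a complex Hilbert space is, for every `λ > ‖T‖`,
of the form `λ (U₁ + U₂ + U₃)` with `U₁, U₂, U₃` unitary. -/
theorem stmt0 {H : Type*} [NormedAddCommGroup H] [InnerProductSpace ℂ H] [CompleteSpace H]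
    (T : H →L[ℂ] H) (lam : ℝ) (hlam : ‖T‖ < lam) :
    ∃ U₁ U₂ U₃ : H →L[ℂ] H, U₁ ∈ unitary (H →L[ℂ] H) ∧ U₂ ∈ unitary (H →L[ℂ] H) ∧
      U₃ ∈ unitary (H →L[ℂ] H) ∧ T = (lam : ℂ) • (U₁ + U₂ + U₃) := by
  rcases subsingleton_or_nontrivial (H →L[ℂ] H) with hsub | hnt
  · refine ⟨1, 1, 1, ?_, ?_, ?_, Subsingleton.elim _ _⟩ <;>
      exact Unitary.mem_iff.mpr ⟨Subsingleton.elim _ _, Subsingleton.elim _ _⟩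
  · have hlam0 : (0:ℝ) < lam := lt_of_le_of_lt (norm_nonneg T) hlam
    have hlamC : (lam : ℂ) ≠ 0 := by exact_mod_cast hlam0.ne'
    set a : H →L[ℂ] H := (lam : ℂ)⁻¹ • T with hadef
    have hanorm : ‖a‖ < 1 := by
      rw [hadef, norm_smul, norm_inv, Complex.norm_real, Real.norm_eq_abs,
        abs_of_pos hlam0]
      rw [inv_mul_lt_iff₀ hlam0, mul_one]
      exact hlam
    obtain ⟨u₁, h₁, u₂, h₂, u₃, h₃, hsum⟩ := aux_three a hanorm
    refine ⟨u₁, u₂, u₃, h₁, h₂, h₃, ?_⟩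
    rw [← hsum, hadef, smul_smul, mul_inv_cancel₀ hlamC, one_smul]
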